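/- Let d ≥ 1 and λ ∈ ℂ^d. For every integer m ≥ 0 and every 1 ≤ k ≤ d, β_{m,k}(λ) = Σ_{j=k}^{d} ((j−1) choose (k−1)) · α_{m+k,j}(λ). -/

import Mathlib

open Finset

/-- The `k`-th elementary symmetric polynomial of `lam 1, …, lam d`
(with `esymm d lam k = 0` for `k > d`). -/
noncomputable def esymm (d : ℕ) (lam : Fin d → ℂ) (k : ℕ) : ℂ :=
  ∑ S ∈ Finset.powersetCard k (Finset.univ : Finset (Fin d)), ∏ j ∈ S, lam j

/-- `α_{m,k}(λ)`: the sum over all `y ∈ {0,…,m}^d` with exactly `k` strictly positive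
coordinates and total sum `m` of `∏ j, λ_j ^ y_j`. -/
noncomputable def alpha (d : ℕ) (lam : Fin d → ℂ) (m k : ℕ) : ℂ :=
  ∑ y ∈ (Fintype.piFinset fun _ : Fin d => Finset.range (m + 1)).filter
      (fun y => (Finset.univ.filter fun j => 0 < y j).card = k ∧ ∑ j, y j = m),
    ∏ j, lam j ^ y j

/-- `β_{m,k}(λ)`, defined by `β_{0,k} = e_k(λ)` and
`β_{m,k} = β_{m−1,1}·e_k(λ) − β_{m−1,k+1}` (the convention `β_{m−1,d+1} = 0` is
automatic since `esymm d lam k = 0` for `k > d`, so `β_{m,k} = 0` for `k > d`). -/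
noncomputable def betaC (d : ℕ) (lam : Fin d → ℂ) : ℕ → ℕ → ℂ
  | 0, k => esymm d lam k
  | m + 1, k => betaC d lam m 1 * esymm d lam k - betaC d lam m (k + 1)

namespace BetaAux

variable {d : ℕ}

/-- support of a vector -/
def supp (y : Fin d → ℕ) : Finset (Fin d) := univ.filter fun j => 0 < y j

lemma mem_supp {y : Fin d → ℕ} {j : Fin d} : j ∈ supp y ↔ 0 < y j := by
  simp [supp]

lemma supp_card_le (y : Fin d → ℕ) : (supp y).card ≤ d := by
  simpa using (card_le_card (subset_univ (supp y)))

lemma supp_card_le_sum (y : Fin d → ℕ) : (supp y).card ≤ ∑ j, y j := by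
  calc (supp y).card = ∑ j ∈ supp y, 1 := by simp
  _ ≤ ∑ j ∈ supp y, y j := Finset.sum_le_sum (fun j hj => mem_supp.mp hj)
  _ ≤ ∑ j, y j := Finset.sum_le_sum_of_subset (subset_univ _)

/-- indicator vector of a set -/
def ind (S : Finset (Fin d)) : Fin d → ℕ := fun j => if j ∈ S then 1 else 0

lemma sum_ind (S : Finset (Fin d)) : ∑ j, ind S j = S.card := by
  simp [ind, Finset.sum_ite_mem]

/-- vectors with prescribed total sum -/
def T (d M : ℕ) : Finset (Fin d → ℕ) :=
  (Fintype.piFinset fun _ : Fin d => Finset.range (M + 1)).filter (fun y => ∑ j, y j = M)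

lemma mem_T {M : ℕ} {y : Fin d → ℕ} : y ∈ T d M ↔ ∑ j, y j = M := by
  constructor
  · exact fun h => (mem_filter.mp h).2
  · intro h
    refine mem_filter.mpr ⟨Fintype.mem_piFinset.mpr fun i => ?_, h⟩
    rw [mem_range, Nat.lt_succ_iff, ← h]
    exact Finset.single_le_sum (fun _ _ => Nat.zero_le _) (mem_univ i)

lemma alpha_eq (lam : Fin d → ℂ) (m k : ℕ) :
    alpha d lam m k
      = ∑ y ∈ (T d m).filter (fun y => (supp y).card = k), ∏ j, lam j ^ y j := by
  rw [alpha, T, filter_filter]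
  congr 1
  ext y
  simp only [mem_filter]
  simp only [supp, Fintype.mem_piFinset, mem_range]
  tauto

lemma alpha_eq_zero_of_lt (lam : Fin d → ℂ) {m k : ℕ} (h : m < k) :
    alpha d lam m k = 0 := by
  rw [alpha_eq]
  refine Finset.sum_eq_zero fun y hy => ?_
  rcases mem_filter.mp hy with ⟨hT, hc⟩
  have h1 : (supp y).card ≤ m := (mem_T.mp hT) ▸ supp_card_le_sum y
  omega

lemma sum_alpha (lam : Fin d → ℂ) {M : ℕ} (hM : 1 ≤ M) :
    ∑ j ∈ Icc 1 d, alpha d lam M j = ∑ y ∈ T d M, ∏ j, lam j ^ y j := by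
  simp only [alpha_eq]
  refine Finset.sum_fiberwise_of_maps_to (fun y hy => ?_) _
  have hs := mem_T.mp hy
  refine mem_Icc.mpr ⟨?_, supp_card_le y⟩
  rw [Nat.one_le_iff_ne_zero, Ne, Finset.card_eq_zero]
  intro hemp
  have : ∑ j, y j = 0 := Finset.sum_eq_zero fun j _ => by
    by_contra hj
    exact (Finset.notMem_empty j) (hemp ▸ mem_supp.mpr (Nat.pos_of_ne_zero hj))
  omega

lemma sum_choose_alpha (lam : Fin d → ℂ) {M k : ℕ} (hM : 1 ≤ M) (hk : 1 ≤ k) :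
    ∑ j ∈ Icc k d, ((j.choose k : ℕ) : ℂ) * alpha d lam M j
      = ∑ y ∈ T d M, (((supp y).card.choose k : ℕ) : ℂ) * ∏ j, lam j ^ y j := by
  have hsub : Icc k d ⊆ Icc 1 d := Icc_subset_Icc hk le_rfl
  rw [show ∑ j ∈ Icc k d, ((j.choose k : ℕ) : ℂ) * alpha d lam M j
      = ∑ j ∈ Icc 1 d, ((j.choose k : ℕ) : ℂ) * alpha d lam M j
    from Finset.sum_subset hsub (fun j hj hj' => ?_)]
  · simp only [alpha_eq, Finset.mul_sum]
    rw [← Finset.sum_fiberwise_of_maps_to (t := Icc 1 d)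
        (g := fun y => (supp y).card)
        (fun y hy => ?_) (fun y => (((supp y).card.choose k : ℕ) : ℂ) * ∏ j, lam j ^ y j)]
    · refine Finset.sum_congr rfl fun j _ => Finset.sum_congr rfl fun y hy => ?_
      rw [(mem_filter.mp hy).2]
    · -- maps to, same as in sum_alpha
      have hs := mem_T.mp hy
      refine mem_Icc.mpr ⟨?_, supp_card_le y⟩
      rw [Nat.one_le_iff_ne_zero, Ne, Finset.card_eq_zero]
      intro hemp
      have : ∑ j, y j = 0 := Finset.sum_eq_zero fun j _ => by
        by_contra hj
        exact (Finset.notMem_empty j) (hemp ▸ mem_supp.mpr (Nat.pos_of_ne_zero hj))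
      omega
  · have : j < k := by
      rcases mem_Icc.mp hj with ⟨h1, h2⟩
      by_contra h
      exact hj' (mem_Icc.mpr ⟨not_lt.mp h, h2⟩)
    simp [Nat.choose_eq_zero_of_lt this]

lemma prod_pow_ind (lam : Fin d → ℂ) (S : Finset (Fin d)) :
    ∏ j, lam j ^ ind S j = ∏ j ∈ S, lam j := by
  simp [ind, apply_ite (lam · ^ ·), Finset.prod_ite_mem]

lemma prod_pow_add (lam : Fin d → ℂ) (y z : Fin d → ℕ) :
    ∏ j, lam j ^ (y j + z j) = (∏ j, lam j ^ y j) * ∏ j, lam j ^ z j := by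
  simp [pow_add, Finset.prod_mul_distrib]

/-- Key combinatorial identity. -/
lemma key (lam : Fin d → ℂ) {M k : ℕ} (hM : 1 ≤ M) (hk : 1 ≤ k) :
    (∑ y ∈ T d M, ∏ j, lam j ^ y j) * esymm d lam k
      = ∑ z ∈ T d (M + k), (((supp z).card.choose k : ℕ) : ℂ) * ∏ j, lam j ^ z j := by
  classical
  have hrhs : ∀ z : Fin d → ℕ,
      (((supp z).card.choose k : ℕ) : ℂ) * ∏ j, lam j ^ z j
        = ∑ S ∈ powersetCard k (univ : Finset (Fin d)),
            (if S ⊆ supp z then ∏ j, lam j ^ z j else 0) := by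
    intro z
    rw [← Finset.sum_filter]
    have hset : (powersetCard k (univ : Finset (Fin d))).filter (fun S => S ⊆ supp z)
        = powersetCard k (supp z) := by
      ext S
      simp only [mem_filter, mem_powersetCard]
      constructor
      · rintro ⟨⟨_, hc⟩, hsub⟩; exact ⟨hsub, hc⟩
      · rintro ⟨hsub, hc⟩; exact ⟨⟨subset_univ _, hc⟩, hsub⟩
    rw [hset, Finset.sum_const, ← Finset.card_powersetCard k (supp z)]
    simp [nsmul_eq_mul]
  simp only [hrhs]
  rw [esymm, Finset.sum_mul_sum]
  have e1 : ∑ y ∈ T d M, ∑ S ∈ powersetCard k (univ : Finset (Fin d)),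
        (∏ j, lam j ^ y j) * ∏ j ∈ S, lam j
      = ∑ p ∈ T d M ×ˢ powersetCard k (univ : Finset (Fin d)),
        (∏ j, lam j ^ p.1 j) * ∏ j ∈ p.2, lam j :=
    (Finset.sum_product' _ _ _).symm
  have e2 : ∑ z ∈ T d (M + k), ∑ S ∈ powersetCard k (univ : Finset (Fin d)),
        (if S ⊆ supp z then ∏ j, lam j ^ z j else 0)
      = ∑ p ∈ T d (M + k) ×ˢ powersetCard k (univ : Finset (Fin d)),
        (if p.2 ⊆ supp p.1 then ∏ j, lam j ^ p.1 j else 0) :=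
    (Finset.sum_product' _ _ _).symm
  have e3 : ∑ p ∈ (T d (M + k) ×ˢ powersetCard k (univ : Finset (Fin d))).filter
        (fun p => p.2 ⊆ supp p.1), ∏ j, lam j ^ p.1 j
      = ∑ p ∈ T d (M + k) ×ˢ powersetCard k (univ : Finset (Fin d)),
        (if p.2 ⊆ supp p.1 then ∏ j, lam j ^ p.1 j else 0) :=
    Finset.sum_filter _ _
  rw [e1, e2, ← e3]
  refine Finset.sum_nbij' (fun p => (fun j => p.1 j + ind p.2 j, p.2))
      (fun p => (fun j => p.1 j - ind p.2 j, p.2)) ?_ ?_ ?_ ?_ ?_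
  · rintro ⟨y, S⟩ hp
    rcases Finset.mem_product.mp hp with ⟨hy, hS⟩
    have hcard : S.card = k := (mem_powersetCard.mp hS).2
    refine Finset.mem_filter.mpr ⟨Finset.mem_product.mpr ⟨mem_T.mpr ?_, hS⟩, ?_⟩
    · show (∑ j, (y j + ind S j)) = M + k
      rw [Finset.sum_add_distrib, mem_T.mp hy, sum_ind, hcard]
    · intro j hj
      refine mem_supp.mpr ?_
      have : ind S j = 1 := by simp [ind, hj]
      show 0 < y j + ind S j
      omega
  · rintro ⟨z, S⟩ hp
    rcases Finset.mem_filter.mp hp with ⟨hp', hsub⟩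
    rcases Finset.mem_product.mp hp' with ⟨hz, hS⟩
    refine Finset.mem_product.mpr ⟨mem_T.mpr ?_, hS⟩
    have hcard : S.card = k := (mem_powersetCard.mp hS).2
    have hle : ∀ j, ind S j ≤ z j := by
      intro j
      by_cases hj : j ∈ S
      · have : 0 < z j := mem_supp.mp (hsub hj)
        simp only [ind, if_pos hj]
        omega
      · simp [ind, hj]
    have hsum : (∑ j, (z j - ind S j)) + ∑ j, ind S j = ∑ j, z j := by
      rw [← Finset.sum_add_distrib]
      exact Finset.sum_congr rfl fun j _ => Nat.sub_add_cancel (hle j)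
    rw [sum_ind, hcard, mem_T.mp hz] at hsum
    show (∑ j, (z j - ind S j)) = M
    omega
  · rintro ⟨y, S⟩ hp
    have : (fun j => y j + ind S j - ind S j) = y := by
      funext j; omega
    simp [this]
  · rintro ⟨z, S⟩ hp
    rcases Finset.mem_filter.mp hp with ⟨hp', hsub⟩
    have hle : ∀ j, ind S j ≤ z j := by
      intro j
      by_cases hj : j ∈ S
      · have : 0 < z j := mem_supp.mp (hsub hj)
        simp only [ind, if_pos hj]
        omega
      · simp [ind, hj]
    have : (fun j => z j - ind S j + ind S j) = z := by
      funext j; exact Nat.sub_add_cancel (hle j)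
    simp [this]
  · rintro ⟨y, S⟩ hp
    show (∏ j, lam j ^ y j) * ∏ j ∈ S, lam j = ∏ j, lam j ^ (y j + ind S j)
    rw [prod_pow_add, prod_pow_ind]

lemma betaC_eq_zero (lam : Fin d → ℂ) (m : ℕ) : ∀ k, d < k → betaC d lam m k = 0 := by
  induction m with
  | zero =>
    intro k hk
    have : powersetCard k (univ : Finset (Fin d)) = ∅ :=
      Finset.powersetCard_eq_empty.mpr (by simpa using hk)
    simp [betaC, esymm, this]
  | succ m ih =>
    intro k hk
    have h1 : esymm d lam k = 0 := by
      have : powersetCard k (univ : Finset (Fin d)) = ∅ :=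
        Finset.powersetCard_eq_empty.mpr (by simpa using hk)
      simp [esymm, this]
    simp [betaC, h1, ih (k + 1) (by omega)]

end BetaAux

open BetaAux in
/-- Lemma B.6: relation between the coefficients `β_{m,k}` and `α_{m,k}`. -/
theorem beta_eq_sum_alpha (d : ℕ) (hd : 1 ≤ d) (lam : Fin d → ℂ)
    (m k : ℕ) (hk1 : 1 ≤ k) (hkd : k ≤ d) :
    betaC d lam m k =
      ∑ j ∈ Finset.Icc k d, ((j - 1).choose (k - 1) : ℂ) * alpha d lam (m + k) j := by
  induction m generalizing k with
  | zero =>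
    -- betaC 0 k = esymm k and the sum collapses to the j = k term, which is α_{k,k} = e_k
    rw [show betaC d lam 0 k = esymm d lam k from rfl]
    rw [Finset.sum_eq_single_of_mem k (Finset.mem_Icc.mpr ⟨le_rfl, hkd⟩)
        (fun j hj hne => ?_)]
    · rw [Nat.choose_self, Nat.cast_one, one_mul, zero_add]
      -- esymm = alpha k k
      rw [alpha_eq, esymm]
      refine Finset.sum_nbij' (fun S => ind S) (fun y => supp y) ?_ ?_ ?_ ?_ ?_
      · intro S hS
        have hc : S.card = k := (Finset.mem_powersetCard.mp hS).2
        have hsupp : supp (ind S) = S := by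
          ext j; by_cases hj : j ∈ S <;> simp [mem_supp, ind, hj]
        refine Finset.mem_filter.mpr ⟨mem_T.mpr ?_, by rw [hsupp, hc]⟩
        rw [sum_ind, hc]
      · intro y hy
        rcases Finset.mem_filter.mp hy with ⟨hT, hc⟩
        exact Finset.mem_powersetCard.mpr ⟨Finset.subset_univ _, hc⟩
      · intro S hS
        ext j; by_cases hj : j ∈ S <;> simp [mem_supp, ind, hj]
      · intro y hy
        rcases Finset.mem_filter.mp hy with ⟨hT, hc⟩
        have hsum := mem_T.mp hT
        have hone : ∀ j ∈ supp y, y j = 1 := by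
          by_contra hcon
          push_neg at hcon
          rcases hcon with ⟨i, hi, hne⟩
          have h2 : 2 ≤ y i := by
            have := mem_supp.mp hi; omega
          have hlt : ∑ j ∈ supp y, 1 < ∑ j ∈ supp y, y j :=
            Finset.sum_lt_sum (fun j hj => mem_supp.mp hj) ⟨i, hi, by omega⟩
          have hles : ∑ j ∈ supp y, y j ≤ ∑ j, y j :=
            Finset.sum_le_sum_of_subset (Finset.subset_univ _)
          simp only [Finset.sum_const, smul_eq_mul, mul_one] at hlt
          omega
        funext j
        by_cases hj : j ∈ supp y
        · simp [ind, hj, (hone j hj).symm]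
        · have : y j = 0 := by
            by_contra hne
            exact hj (mem_supp.mpr (Nat.pos_of_ne_zero hne))
          simp [ind, hj, this]
      · intro S hS
        rw [prod_pow_ind]
    · -- other terms vanish: α_{k,j} = 0 for j > k
      have hjk : k < j := by
        rcases Finset.mem_Icc.mp hj with ⟨h1, h2⟩
        omega
      rw [zero_add, alpha_eq_zero_of_lt lam hjk, mul_zero]
  | succ m ih =>
    rw [show betaC d lam (m + 1) k
        = betaC d lam m 1 * esymm d lam k - betaC d lam m (k + 1) from rfl]
    have h1 : betaC d lam m 1 = ∑ j ∈ Finset.Icc 1 d, alpha d lam (m + 1) j := by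
      rw [ih 1 le_rfl hd]
      exact Finset.sum_congr rfl fun j _ => by simp
    have h2 : betaC d lam m (k + 1)
        = ∑ j ∈ Finset.Icc (k + 1) d, ((j - 1).choose k : ℂ) * alpha d lam (m + 1 + k) j := by
      by_cases hkd' : k + 1 ≤ d
      · rw [ih (k + 1) (by omega) hkd']
        refine Finset.sum_congr rfl fun j hj => ?_
        have : m + (k + 1) = m + 1 + k := by omega
        rw [this]
        norm_num
      · have hkd'' : k = d := by omega
        rw [betaC_eq_zero lam m (k + 1) (by omega)]
        rw [Finset.Icc_eq_empty (by omega)]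
        simp
    rw [h1, h2, sum_alpha lam (by omega),
        key lam (by omega) hk1]
    rw [← sum_choose_alpha lam (by omega : 1 ≤ m + 1 + k) hk1]
    rw [show Finset.Icc (k+1) d = Finset.Icc k d \ {k} from ?_]
    · rw [Finset.sum_sdiff_eq_sub (by simp [Finset.mem_Icc, hk1, hkd])]
      rw [Finset.sum_singleton]
      have hck : ((k - 1).choose k : ℂ) = 0 := by
        rw [Nat.choose_eq_zero_of_lt (by omega)]; simp
      rw [hck, zero_mul, sub_zero, ← Finset.sum_sub_distrib]
      refine Finset.sum_congr rfl fun j hj => ?_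
      rcases Finset.mem_Icc.mp hj with ⟨hj1, hj2⟩
      rw [← sub_mul]
      congr 2
      · -- C(j,k) - C(j-1,k) = C(j-1,k-1)
        have hpas : (j - 1).choose (k - 1) + (j - 1).choose k = j.choose k := by
          have hj' : j = (j - 1) + 1 := by omega
          have hk' : k = (k - 1) + 1 := by omega
          rw [hj', hk']
          simp [Nat.choose_succ_succ]
        push_cast [← hpas]
        ring
    · ext j
      simp only [Finset.mem_Icc, Finset.mem_sdiff, Finset.mem_singleton]
      omega
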